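/- arXiv:2509.23374 — 5 statements merged into one kernel-verified Lean document; each statement's English description precedes it below -/
import Mathlib

section
/- Let R ∈ ℝ^{n×n^{m-1}} be a column-stochastic matrix (entries non-negative, each column summing to 1), let x ∈ ℝ^n be entrywise non-negative with eᵀx ≤ 1, and let 0 ≤ α < 1/(m-1) with m ≥ 2. Define B = α R (I ⊗ x ⊗ ⋯ ⊗ x + x ⊗ I ⊗ x ⊗ ⋯ ⊗ x + ⋯ + x ⊗ ⋯ ⊗ x ⊗ I), the sum of m-1 terms where in each term the identity I ∈ ℝ^{n×n} occupies one position and x occupies the other m-2 positions of an (m-1)-fold Kronecker product. Then ρ(B) ≤ α(m-1)(eᵀx)^{m-2} < 1, and hence the matrix I - B is invertible. -/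
open scoped ENNReal

/-- Spectral radius of a real matrix: the supremum of the norms of its complex eigenvalues. -/
noncomputable def specRad {n : ℕ} (A : Matrix (Fin n) (Fin n) ℝ) : ℝ≥0∞ :=
  spectralRadius ℂ (A.map (algebraMap ℝ ℂ))

attribute [local instance] Matrix.linftyOpNormedRing Matrix.linftyOpNormedAlgebra

lemma spectrum_transpose_eq {n : ℕ} (M : Matrix (Fin n) (Fin n) ℂ) :
    spectrum ℂ M.transpose = spectrum ℂ M := by
  ext μ
  simp only [spectrum.mem_iff, Matrix.isUnit_iff_isUnit_det]
  have h : (algebraMap ℂ (Matrix (Fin n) (Fin n) ℂ) μ - M.transpose).det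
      = (algebraMap ℂ (Matrix (Fin n) (Fin n) ℂ) μ - M).det := by
    rw [← Matrix.det_transpose (algebraMap ℂ (Matrix (Fin n) (Fin n) ℂ) μ - M),
      Matrix.transpose_sub]
    congr 2
    simp [Algebra.algebraMap_eq_smul_one, Matrix.transpose_smul]
  rw [h]

/-- For a column-stochastic `R ∈ ℝ^{n × n^{m-1}}`, non-negative `x` with `eᵀx ≤ 1`, and
`0 ≤ α < 1/(m-1)`, the matrix `B = α R (I⊗x⊗⋯⊗x + x⊗I⊗x⊗⋯⊗x + ⋯ + x⊗⋯⊗x⊗I)`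
satisfies `ρ(B) ≤ α(m-1)(eᵀx)^{m-2} < 1`, hence `I - B` is invertible.
Here the `k`-th term of the sum is the Kronecker product whose entry at row
`i : Fin (m-1) → Fin n` and column `j : Fin n` is `[i k = j] · ∏_{l ≠ k} x (i l)`. -/
theorem stmt3 {n m : ℕ} (hm : 2 ≤ m) (hn : 0 < n)
    (R : Matrix (Fin n) (Fin (m - 1) → Fin n) ℝ)
    (hR0 : ∀ i j, 0 ≤ R i j) (hRc : ∀ j, ∑ i, R i j = 1)
    (x : Fin n → ℝ) (hx0 : ∀ i, 0 ≤ x i) (hx1 : ∑ i, x i ≤ 1)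
    (α : ℝ) (hα0 : 0 ≤ α) (hα1 : α < 1 / ((m : ℝ) - 1))
    (B : Matrix (Fin n) (Fin n) ℝ)
    (hB : B = α • (R * ∑ k : Fin (m - 1), Matrix.of fun (i : Fin (m - 1) → Fin n) (j : Fin n) =>
        (if i k = j then (1 : ℝ) else 0) * ∏ l ∈ Finset.univ.erase k, x (i l))) :
    specRad B ≤ ENNReal.ofReal (α * ((m : ℝ) - 1) * (∑ i, x i) ^ (m - 2)) ∧
      specRad B < 1 ∧ IsUnit (1 - B).det := by
  classical
  haveI : Nonempty (Fin n) := ⟨⟨0, hn⟩⟩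
  have hm2 : (2 : ℝ) ≤ (m : ℝ) := by exact_mod_cast hm
  have hm1 : (1 : ℝ) ≤ (m : ℝ) - 1 := by linarith
  set s : ℝ := ∑ i, x i with hs
  have hs0 : 0 ≤ s := Finset.sum_nonneg fun i _ => hx0 i
  set c : ℝ := α * ((m : ℝ) - 1) * s ^ (m - 2) with hc
  have hc0 : 0 ≤ c := by
    apply mul_nonneg (mul_nonneg hα0 (by linarith)) (pow_nonneg hs0 _)
  have hc1 : c < 1 := by
    have hpos : (0 : ℝ) < (m : ℝ) - 1 := by linarith
    have h1 : α * ((m : ℝ) - 1) < 1 := by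
      rw [lt_div_iff₀ hpos] at hα1; linarith
    have h2 : s ^ (m - 2) ≤ 1 := pow_le_one₀ hs0 hx1
    have h3 : 0 ≤ s ^ (m - 2) := pow_nonneg hs0 _
    have h4 : 0 ≤ α * ((m : ℝ) - 1) := mul_nonneg hα0 (by linarith)
    calc c ≤ α * ((m : ℝ) - 1) * 1 := mul_le_mul_of_nonneg_left h2 h4
    _ < 1 := by linarith
  set S : Matrix (Fin (m - 1) → Fin n) (Fin n) ℝ :=
    ∑ k : Fin (m - 1), Matrix.of fun (i : Fin (m - 1) → Fin n) (j : Fin n) =>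
      (if i k = j then (1 : ℝ) else 0) * ∏ l ∈ Finset.univ.erase k, x (i l) with hS
  -- each Kronecker term has column sums `s ^ (m-2)`
  have hterm : ∀ (j : Fin n) (k : Fin (m - 1)),
      (∑ p : Fin (m - 1) → Fin n,
        (if p k = j then (1 : ℝ) else 0) * ∏ l ∈ Finset.univ.erase k, x (p l)) = s ^ (m - 2) := by
    intro j k
    set g : Fin (m - 1) → Fin n → ℝ :=
      fun l y => if l = k then (if y = j then (1 : ℝ) else 0) else x y with hg
    have key : ∀ p : Fin (m - 1) → Fin n,
        (if p k = j then (1 : ℝ) else 0) * ∏ l ∈ Finset.univ.erase k, x (p l)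
          = ∏ l : Fin (m - 1), g l (p l) := by
      intro p
      rw [← Finset.mul_prod_erase Finset.univ (fun l => g l (p l)) (Finset.mem_univ k)]
      have h1 : g k (p k) = if p k = j then (1 : ℝ) else 0 := by simp [hg]
      have h2 : ∀ l ∈ Finset.univ.erase k, g l (p l) = x (p l) := fun l hl => by
        simp [hg, Finset.ne_of_mem_erase hl]
      rw [h1, Finset.prod_congr rfl h2]
    calc (∑ p : Fin (m - 1) → Fin n,
            (if p k = j then (1 : ℝ) else 0) * ∏ l ∈ Finset.univ.erase k, x (p l))
        = ∑ p : Fin (m - 1) → Fin n, ∏ l : Fin (m - 1), g l (p l) := by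
          exact Finset.sum_congr rfl fun p _ => key p
      _ = ∑ p ∈ Fintype.piFinset (fun _ : Fin (m - 1) => (Finset.univ : Finset (Fin n))),
            ∏ l : Fin (m - 1), g l (p l) := by rw [Fintype.piFinset_univ]
      _ = ∏ l : Fin (m - 1), ∑ y : Fin n, g l y := (Finset.prod_univ_sum _ _).symm
      _ = (∑ y : Fin n, g k y) * ∏ l ∈ Finset.univ.erase k, ∑ y : Fin n, g l y :=
          (Finset.mul_prod_erase Finset.univ _ (Finset.mem_univ k)).symm
      _ = s ^ (m - 2) := by
          have h1 : (∑ y : Fin n, g k y) = 1 := by simp [hg]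
          have h2 : ∀ l ∈ Finset.univ.erase k, (∑ y : Fin n, g l y) = s := by
            intro l hl
            simp [hg, Finset.ne_of_mem_erase hl, hs]
          rw [h1, Finset.prod_congr rfl h2, Finset.prod_const, one_mul,
            Finset.card_erase_of_mem (Finset.mem_univ k), Finset.card_univ,
            Fintype.card_fin, show m - 1 - 1 = m - 2 from by omega]
  -- column sums of B
  have hcol : ∀ j : Fin n, ∑ i, B i j = c := by
    intro j
    have hBij : ∀ i, B i j = α * ∑ p, R i p * S p j := by
      intro i
      rw [hB]
      simp [Matrix.mul_apply, Matrix.smul_apply, hS]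
    calc ∑ i, B i j = α * ∑ i, ∑ p, R i p * S p j := by
          rw [Finset.mul_sum]; exact Finset.sum_congr rfl fun i _ => hBij i
      _ = α * ∑ p, (∑ i, R i p) * S p j := by
          rw [Finset.sum_comm]
          congr 1
          exact Finset.sum_congr rfl fun p _ => (Finset.sum_mul _ _ _).symm
      _ = α * ∑ p, S p j := by
          congr 1
          exact Finset.sum_congr rfl fun p _ => by rw [hRc p, one_mul]
      _ = c := by
          have : ∑ p, S p j = ((m : ℝ) - 1) * s ^ (m - 2) := by
            have : ∀ p : Fin (m - 1) → Fin n, S p j = ∑ k : Fin (m - 1),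
                (if p k = j then (1 : ℝ) else 0) * ∏ l ∈ Finset.univ.erase k, x (p l) := by
              intro p; simp [hS, Matrix.sum_apply]
            rw [Finset.sum_congr rfl fun p _ => this p, Finset.sum_comm]
            rw [Finset.sum_congr rfl fun k _ => hterm j k, Finset.sum_const,
              Finset.card_univ, Fintype.card_fin, nsmul_eq_mul]
            congr 1
            rw [Nat.cast_sub (by omega)]
            norm_num
          rw [this, hc, mul_assoc]
  -- entries of B are nonnegative
  have hB0 : ∀ i j, 0 ≤ B i j := by
    intro i j
    rw [hB]
    simp only [Matrix.smul_apply, Matrix.mul_apply, smul_eq_mul]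
    apply mul_nonneg hα0
    apply Finset.sum_nonneg
    intro p _
    apply mul_nonneg (hR0 i p)
    simp only [hS, Matrix.sum_apply, Matrix.of_apply]
    apply Finset.sum_nonneg
    intro k _
    apply mul_nonneg (by positivity) (Finset.prod_nonneg fun l _ => hx0 (p l))
  -- move to ℂ
  set M : Matrix (Fin n) (Fin n) ℂ := B.map (algebraMap ℝ ℂ) with hM
  haveI : CompleteSpace (Matrix (Fin n) (Fin n) ℂ) := FiniteDimensional.complete ℂ _
  have hspec : specRad B = spectralRadius ℂ M.transpose := by
    unfold specRad spectralRadius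
    rw [spectrum_transpose_eq]
  have hnormle : (‖M.transpose‖₊ : ℝ≥0∞) ≤ ENNReal.ofReal c := by
    have hrow : ∀ i, (∑ j, ‖M.transpose i j‖₊) = c.toNNReal := by
      intro i
      apply NNReal.coe_injective
      push_cast
      have hent : ∀ j, ‖M.transpose i j‖ = B j i := by
        intro j
        simp only [Matrix.transpose_apply, hM, Matrix.map_apply]
        rw [show (algebraMap ℝ ℂ) (B j i) = ((B j i : ℝ) : ℂ) from rfl,
          Complex.norm_real, Real.norm_eq_abs, abs_of_nonneg (hB0 j i)]
      rw [Finset.sum_congr rfl fun j _ => hent j, hcol i, Real.coe_toNNReal _ hc0]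
    have hb : ‖M.transpose‖₊ ≤ c.toNNReal := by
      rw [Matrix.linfty_opNNNorm_def]
      exact Finset.sup_le fun i _ => le_of_eq (hrow i)
    calc (‖M.transpose‖₊ : ℝ≥0∞) ≤ (c.toNNReal : ℝ≥0∞) := ENNReal.coe_le_coe.mpr hb
      _ = ENNReal.ofReal c := rfl
  have hrad : specRad B ≤ ENNReal.ofReal c := by
    rw [hspec]
    exact le_trans (spectrum.spectralRadius_le_nnnorm (𝕜 := ℂ) M.transpose) hnormle
  have hlt1 : specRad B < 1 := by
    refine lt_of_le_of_lt hrad ?_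
    exact_mod_cast ENNReal.ofReal_lt_one.mpr hc1
  refine ⟨hrad, hlt1, ?_⟩
  -- invertibility of 1 - B
  rw [isUnit_iff_ne_zero]
  intro hdet
  have h1mem : (1 : ℂ) ∈ spectrum ℂ M := by
    rw [spectrum.mem_iff]
    rw [Matrix.isUnit_iff_isUnit_det]
    have heq : algebraMap ℂ (Matrix (Fin n) (Fin n) ℂ) 1 - M = (1 - B).map (algebraMap ℝ ℂ) := by
      rw [map_one]
      ext i j
      simp only [hM, Matrix.map_apply, Matrix.sub_apply, Matrix.one_apply, map_sub]
      split_ifs <;> simp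
    rw [heq]
    have : ((1 - B).map (algebraMap ℝ ℂ)).det = algebraMap ℝ ℂ (1 - B).det := by
      rw [RingHom.map_det]; rfl
    rw [this, hdet, map_zero]
    exact not_isUnit_zero
  have hge : (1 : ℝ≥0∞) ≤ specRad B := by
    unfold specRad
    have := le_iSup₂ (f := fun (k : ℂ) (_ : k ∈ spectrum ℂ M) => (‖k‖₊ : ℝ≥0∞)) 1 h1mem
    rw [nnnorm_one, ENNReal.coe_one] at this
    exact this
  exact absurd (lt_of_le_of_lt hge hlt1) (lt_irrefl _)
end

section
/- Let m ≥ 2 and 0 ≤ α < 1/(m-1). For 0 ≤ z ≤ 1, define z' = [αz^{m-1} + (1-α) - z]/[1 - α(m-1)z^{m-2}] + z. Then 0 ≤ z ≤ 1 implies z' ≤ 1. -/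
/-- The scalar Newton update for multilinear PageRank:
if `m ≥ 2`, `0 ≤ α < 1/(m-1)` and `0 ≤ z ≤ 1`, then
`z' = (αz^{m-1} + (1-α) - z)/(1 - α(m-1)z^{m-2}) + z ≤ 1`. -/
theorem stmt6 (m : ℕ) (hm : 2 ≤ m) (α z : ℝ) (hα0 : 0 ≤ α)
    (hα1 : α < 1 / ((m : ℝ) - 1)) (hz0 : 0 ≤ z) (hz1 : z ≤ 1) :
    (α * z ^ (m - 1) + (1 - α) - z) / (1 - α * ((m : ℝ) - 1) * z ^ (m - 2)) + z ≤ 1 := by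
  have hm1 : (1:ℝ) ≤ (m:ℝ) - 1 := by
    have : (2:ℝ) ≤ (m:ℝ) := by exact_mod_cast hm
    linarith
  have hm1pos : (0:ℝ) < (m:ℝ) - 1 := by linarith
  have hαm : α * ((m:ℝ) - 1) < 1 := by
    have := (lt_div_iff₀ hm1pos).mp hα1
    nlinarith
  have hzpow2 : z ^ (m - 2) ≤ 1 := pow_le_one₀ hz0 hz1
  have hzpow2' : (0:ℝ) ≤ z ^ (m - 2) := pow_nonneg hz0 _
  have hD : 0 < 1 - α * ((m:ℝ) - 1) * z ^ (m - 2) := by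
    have : α * ((m:ℝ) - 1) * z ^ (m - 2) ≤ α * ((m:ℝ) - 1) * 1 :=
      mul_le_mul_of_nonneg_left hzpow2 (by positivity)
    nlinarith
  have hmm : m - 1 = (m - 2) + 1 := by omega
  have hpow : z ^ (m - 1) = z ^ (m - 2) * z := by rw [hmm, pow_succ]
  have hcast : ((m - 1 : ℕ) : ℝ) = (m:ℝ) - 1 := by
    have : (1:ℕ) ≤ m := by omega
    push_cast [this]; ring
  -- key inequality: (m-1) z^{m-2} (1-z) ≤ 1 - z^{m-1}
  have key : ((m:ℝ) - 1) * z ^ (m - 2) * (1 - z) ≤ 1 - z ^ (m - 1) := by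
    have hsum : (∑ i ∈ Finset.range (m - 1), z ^ i) * (z - 1) = z ^ (m - 1) - 1 :=
      geom_sum_mul z (m - 1)
    have hterm : ∀ i ∈ Finset.range (m - 1), z ^ (m - 2) ≤ z ^ i := by
      intro i hi
      exact pow_le_pow_of_le_one hz0 hz1 (by simp at hi; omega)
    have hsum_ge : ((m - 1 : ℕ) : ℝ) * z ^ (m - 2) ≤ ∑ i ∈ Finset.range (m - 1), z ^ i := by
      calc ((m - 1 : ℕ) : ℝ) * z ^ (m - 2)
          = ∑ _i ∈ Finset.range (m - 1), z ^ (m - 2) := by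
            rw [Finset.sum_const, Finset.card_range, nsmul_eq_mul]
        _ ≤ _ := Finset.sum_le_sum hterm
    rw [hcast] at hsum_ge
    nlinarith [mul_le_mul_of_nonneg_right hsum_ge (by linarith : (0:ℝ) ≤ 1 - z)]
  
  have h2 : (α * z ^ (m - 1) + (1 - α) - z) / (1 - α * ((m:ℝ) - 1) * z ^ (m - 2)) ≤ 1 - z := by
    rw [div_le_iff₀ hD]
    nlinarith [mul_le_mul_of_nonneg_left key hα0]
  linarith
end

section
/- Let m ≥ 2 and 0 ≤ α < 1/(m-1). If 0 ≤ z ≤ 1 and α z^{m-1} + (1-α) - z ≥ 0, then z + (α z^{m-1} + (1-α) - z)/(1 - α(m-1)z^{m-2}) ≤ 1. -/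
lemma aux_pow_ineq (n : ℕ) (z : ℝ) (hz0 : 0 ≤ z) (hz1 : z ≤ 1) :
    ((n : ℝ) + 1) * z ^ n ≤ 1 + (n : ℝ) * z ^ (n + 1) := by
  induction n with
  | zero => simp
  | succ n ih =>
    have h1 : ((n : ℝ) + 1) * z ^ (n + 1) ≤ z + (n : ℝ) * z ^ (n + 2) := by
      have := mul_le_mul_of_nonneg_right ih hz0
      calc ((n : ℝ) + 1) * z ^ (n + 1) = ((n : ℝ) + 1) * z ^ n * z := by ring
        _ ≤ (1 + (n : ℝ) * z ^ (n + 1)) * z := this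
        _ = z + (n : ℝ) * z ^ (n + 2) := by ring
    have h2 : z + z ^ (n + 1) ≤ 1 + z ^ (n + 2) := by
      have hzp : z ^ (n + 1) ≤ 1 := pow_le_one₀ hz0 hz1
      nlinarith [mul_nonneg (sub_nonneg.2 hz1) (sub_nonneg.2 hzp), pow_succ z (n + 1)]
    have h3 : z ^ (n + 1 + 1) = z ^ (n + 2) := by norm_num
    push_cast
    nlinarith [pow_nonneg hz0 (n + 1)]

/-- Scalar analysis of the Newton iteration for multilinear PageRank: if `m ≥ 2`,
`0 ≤ α < 1/(m-1)`, `z ∈ [0,1]` and `αz^{m-1} + (1-α) - z ≥ 0`, then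
`z + (αz^{m-1} + (1-α) - z)/(1 - α(m-1)z^{m-2}) ≤ 1`. -/
theorem stmt7 (m : ℕ) (hm : 2 ≤ m) (α z : ℝ) (hα0 : 0 ≤ α)
    (hα1 : α < 1 / ((m : ℝ) - 1)) (hz0 : 0 ≤ z) (hz1 : z ≤ 1)
    (hnum : 0 ≤ α * z ^ (m - 1) + (1 - α) - z) :
    z + (α * z ^ (m - 1) + (1 - α) - z) / (1 - α * ((m : ℝ) - 1) * z ^ (m - 2)) ≤ 1 := by
  obtain ⟨n, rfl⟩ : ∃ n, m = n + 2 := ⟨m - 2, by omega⟩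
  have hm1 : (↑(n + 2) : ℝ) - 1 = (n : ℝ) + 1 := by push_cast; ring
  have hs1 : n + 2 - 1 = n + 1 := by omega
  have hs2 : n + 2 - 2 = n := by omega
  simp only [hs1, hs2, hm1] at hα1 hnum ⊢
  have hn1 : (0 : ℝ) < (n : ℝ) + 1 := by positivity
  have hαm : α * ((n : ℝ) + 1) < 1 := by
    rw [div_eq_inv_mul, mul_one] at hα1
    calc α * ((n : ℝ) + 1) < ((n : ℝ) + 1)⁻¹ * ((n : ℝ) + 1) :=
          mul_lt_mul_of_pos_right hα1 hn1
      _ = 1 := inv_mul_cancel₀ hn1.ne'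
  have hzp : z ^ n ≤ 1 := pow_le_one₀ hz0 hz1
  have hD : 0 < 1 - α * ((n : ℝ) + 1) * z ^ n := by
    nlinarith [mul_nonneg (mul_nonneg hα0 hn1.le) (sub_nonneg.2 hzp)]
  rw [← sub_nonneg]
  have key := aux_pow_ineq n z hz0 hz1
  have hps : z ^ (n + 1) = z ^ n * z := pow_succ z n
  have h2 : α * z ^ (n + 1) + (1 - α) - z ≤ (1 - z) * (1 - α * ((n : ℝ) + 1) * z ^ n) := by
    nlinarith [mul_le_mul_of_nonneg_left key hα0]
  have h3 : (α * z ^ (n + 1) + (1 - α) - z) / (1 - α * ((n : ℝ) + 1) * z ^ n) ≤ 1 - z :=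
    (div_le_iff₀ hD).2 h2
  linarith
end

section
/- Let f(x) = αR(x⊗x) + (1-α)v - x with R ∈ ℝ^{n×n²} column-stochastic, v stochastic, 0 ≤ α < 1/2. Define the Newton sequence x_0 = 0, x_{k+1} = x_k - J_f(x_k)⁻¹ f(x_k) where J_f(x) = αR(I⊗x + x⊗I) - I. Then for every k: x_k ≥ 0 entrywise, eᵀx_k ≤ 1, f(x_k) ≥ 0 entrywise, and x_{k+1} ≥ x_k entrywise. -/
/-- The multilinear PageRank residual map for `m = 3`:
`f(x) = α R (x⊗x) + (1-α) v - x`. -/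
noncomputable def fMPR {n : ℕ} (α : ℝ) (R : Matrix (Fin n) (Fin n × Fin n) ℝ)
    (v x : Fin n → ℝ) : Fin n → ℝ :=
  α • R.mulVec (fun p => x p.1 * x p.2) + (1 - α) • v - x

/-- The Jacobian `J_f(x) = α R (I⊗x + x⊗I) - I` of `fMPR` at `x`. -/
noncomputable def JMPR {n : ℕ} (α : ℝ) (R : Matrix (Fin n) (Fin n × Fin n) ℝ)
    (x : Fin n → ℝ) : Matrix (Fin n) (Fin n) ℝ :=
  α • (R * (Matrix.of fun (p : Fin n × Fin n) (k : Fin n) =>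
      (if p.1 = k then (1 : ℝ) else 0) * x p.2 + x p.1 * (if p.2 = k then (1 : ℝ) else 0)))
    - 1

open Matrix Finset

lemma mmat_det {n : ℕ} (C : Matrix (Fin n) (Fin n) ℝ)
    (hC : ∀ i j, 0 ≤ C i j) (hrow : ∀ i, ∑ j, C i j < 1) :
    IsUnit (1 - C).det := by
  rw [isUnit_iff_ne_zero]
  intro hdet
  obtain ⟨w, hw0, hw⟩ := (Matrix.exists_mulVec_eq_zero_iff).2 hdet
  obtain ⟨j, hj⟩ := Function.ne_iff.1 hw0
  have : Nonempty (Fin n) := ⟨j⟩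
  obtain ⟨i, -, hi⟩ := Finset.exists_max_image Finset.univ (fun i => |w i|) ⟨j, Finset.mem_univ j⟩
  have hwi : 0 < |w i| := lt_of_lt_of_le (abs_pos.2 hj) (hi j (Finset.mem_univ j))
  have h1 : w i = ∑ k, C i k * w k := by
    have := congrFun hw i
    simp [Matrix.mulVec, dotProduct, Matrix.sub_apply, Matrix.one_apply, sub_mul,
      Finset.sum_sub_distrib] at this
    -- this : w i - ∑ k, C i k * w k = 0 hopefully
    linarith [this]
  have h2 : |w i| ≤ ∑ k, C i k * |w i| := by
    calc |w i| = |∑ k, C i k * w k| := by rw [h1]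
    _ ≤ ∑ k, |C i k * w k| := Finset.abs_sum_le_sum_abs _ _
    _ ≤ ∑ k, C i k * |w i| := by
        refine Finset.sum_le_sum fun k _ => ?_
        rw [abs_mul, abs_of_nonneg (hC i k)]
        exact mul_le_mul_of_nonneg_left (hi k (Finset.mem_univ k)) (hC i k)
  rw [← Finset.sum_mul] at h2
  nlinarith [hrow i]

lemma mmat_nonneg {n : ℕ} (C : Matrix (Fin n) (Fin n) ℝ)
    (hC : ∀ i j, 0 ≤ C i j) (hrow : ∀ i, ∑ j, C i j < 1)
    (b : Fin n → ℝ) (hb : ∀ i, 0 ≤ b i) :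
    ∀ i, 0 ≤ (1 - C)⁻¹.mulVec b i := by
  intro i0
  by_contra hneg
  push_neg at hneg
  set y := (1 - C)⁻¹.mulVec b with hy
  have : Nonempty (Fin n) := ⟨i0⟩
  obtain ⟨i, -, hi⟩ := Finset.exists_min_image Finset.univ y ⟨i0, Finset.mem_univ i0⟩
  have hyi : y i < 0 := lt_of_le_of_lt (hi i0 (Finset.mem_univ i0)) hneg
  have hAy : (1 - C).mulVec y = b := by
    rw [hy, Matrix.mulVec_mulVec, Matrix.mul_nonsing_inv _ (mmat_det C hC hrow),
      Matrix.one_mulVec]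
  have h1 : y i - ∑ k, C i k * y k = b i := by
    have := congrFun hAy i
    simp [Matrix.mulVec, dotProduct, Matrix.sub_apply, Matrix.one_apply, sub_mul,
      Finset.sum_sub_distrib] at this
    linarith [this]
  have h2 : ∑ k, C i k * y i ≤ ∑ k, C i k * y k :=
    Finset.sum_le_sum fun k _ => mul_le_mul_of_nonneg_left (hi k (Finset.mem_univ k)) (hC i k)
  rw [← Finset.sum_mul] at h2
  nlinarith [hrow i, hb i]

-- J.mulVec d pointwise
lemma JMPR_mulVec {n : ℕ} (α : ℝ) (R : Matrix (Fin n) (Fin n × Fin n) ℝ)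
    (x d : Fin n → ℝ) (i : Fin n) :
    (JMPR α R x).mulVec d i
      = α * ∑ p : Fin n × Fin n, R i p * (d p.1 * x p.2 + x p.1 * d p.2) - d i := by
  have hM : (Matrix.of fun (p : Fin n × Fin n) (k : Fin n) =>
      (if p.1 = k then (1 : ℝ) else 0) * x p.2 + x p.1 * (if p.2 = k then (1 : ℝ) else 0)).mulVec d
      = fun p => d p.1 * x p.2 + x p.1 * d p.2 := by
    funext p
    simp [Matrix.mulVec, dotProduct, mul_add, Finset.mul_sum, Finset.sum_add_distrib,
      mul_ite, Finset.sum_ite_eq, mul_comm]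
  calc (JMPR α R x).mulVec d i
      = (α • (R.mulVec (fun p => d p.1 * x p.2 + x p.1 * d p.2)) - d) i := by
        rw [JMPR, Matrix.sub_mulVec, Matrix.smul_mulVec, ← Matrix.mulVec_mulVec, hM,
          Matrix.one_mulVec]
    _ = α * ∑ p : Fin n × Fin n, R i p * (d p.1 * x p.2 + x p.1 * d p.2) - d i := by
        simp [Matrix.mulVec, dotProduct]

-- Taylor identity
lemma fMPR_taylor {n : ℕ} (α : ℝ) (R : Matrix (Fin n) (Fin n × Fin n) ℝ)
    (v x d : Fin n → ℝ) (i : Fin n) :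
    fMPR α R v (x + d) i
      = fMPR α R v x i + (JMPR α R x).mulVec d i
        + α * R.mulVec (fun p => d p.1 * d p.2) i := by
  rw [JMPR_mulVec]
  simp only [fMPR, Pi.add_apply, Pi.sub_apply, Pi.smul_apply, smul_eq_mul,
    Matrix.mulVec, dotProduct]
  have : ∀ p : Fin n × Fin n,
      R i p * ((x p.1 + d p.1) * (x p.2 + d p.2))
      = R i p * (x p.1 * x p.2) + R i p * (d p.1 * x p.2 + x p.1 * d p.2)
        + R i p * (d p.1 * d p.2) := by
    intro p; ring
  rw [Finset.sum_congr rfl fun p _ => this p, Finset.sum_add_distrib, Finset.sum_add_distrib]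
  ring

lemma newton_step {n : ℕ} (α : ℝ) (hα0 : 0 ≤ α) (hα1 : α < 1 / 2)
    (R : Matrix (Fin n) (Fin n × Fin n) ℝ)
    (hR0 : ∀ i j, 0 ≤ R i j) (hRc : ∀ j, ∑ i, R i j = 1)
    (v : Fin n → ℝ) (hv1 : ∑ i, v i = 1)
    (x : Fin n → ℝ) (hx : ∀ i, 0 ≤ x i) (hs : ∑ i, x i ≤ 1)
    (hf : ∀ i, 0 ≤ fMPR α R v x i) :
    (∀ i, x i ≤ (x - (JMPR α R x)⁻¹.mulVec (fMPR α R v x)) i) ∧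
    (∀ i, 0 ≤ (x - (JMPR α R x)⁻¹.mulVec (fMPR α R v x)) i) ∧
    (∑ i, (x - (JMPR α R x)⁻¹.mulVec (fMPR α R v x)) i ≤ 1) ∧
    (∀ i, 0 ≤ fMPR α R v (x - (JMPR α R x)⁻¹.mulVec (fMPR α R v x)) i) := by
  set s := ∑ i, x i with hsdef
  have hs0 : 0 ≤ s := Finset.sum_nonneg fun i _ => hx i
  set M : Matrix (Fin n × Fin n) (Fin n) ℝ := Matrix.of fun p k =>
    (if p.1 = k then (1 : ℝ) else 0) * x p.2 + x p.1 * (if p.2 = k then (1 : ℝ) else 0)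
      with hMdef
  set B : Matrix (Fin n) (Fin n) ℝ := α • (R * M) with hBdef
  have hJ : JMPR α R x = B - 1 := rfl
  set f := fMPR α R v x with hfdef
  -- entrywise nonnegativity of B
  have hM0 : ∀ p k, 0 ≤ M p k := by
    intro p k
    simp only [hMdef, Matrix.of_apply]
    have : (0:ℝ) ≤ (if p.1 = k then (1:ℝ) else 0) := by positivity
    have h2 : (0:ℝ) ≤ (if p.2 = k then (1:ℝ) else 0) := by positivity
    have := mul_nonneg this (hx p.2)
    have := mul_nonneg (hx p.1) h2
    linarith
  have hB0 : ∀ i k, 0 ≤ B i k := by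
    intro i k
    simp only [hBdef, Matrix.smul_apply, Matrix.mul_apply, smul_eq_mul]
    exact mul_nonneg hα0 (Finset.sum_nonneg fun p _ => mul_nonneg (hR0 i p) (hM0 p k))
  -- column sums of B
  have hMc : ∀ k, ∑ p : Fin n × Fin n, M p k = 2 * s := by
    intro k
    simp only [hMdef, Matrix.of_apply]
    rw [Fintype.sum_prod_type]
    simp [Finset.sum_add_distrib, ite_mul, mul_ite, Finset.sum_ite_eq',
      Finset.mul_sum, ← hsdef]
    ring
  have hBc : ∀ k, ∑ i, B i k = 2 * α * s := by
    intro k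
    simp only [hBdef, Matrix.smul_apply, Matrix.mul_apply, smul_eq_mul]
    rw [← Finset.mul_sum, Finset.sum_comm]
    have : ∀ p : Fin n × Fin n, ∑ i, R i p * M p k = M p k := by
      intro p
      rw [← Finset.sum_mul, hRc p, one_mul]
    rw [Finset.sum_congr rfl fun p _ => this p, hMc k]
    ring
  -- the M-matrix A = 1 - Bᵀ
  have hrowC : ∀ i, ∑ j, Bᵀ i j < 1 := by
    intro i
    have : ∑ j, Bᵀ i j = 2 * α * s := hBc i
    rw [this]
    nlinarith
  have hC0 : ∀ i j, (0:ℝ) ≤ Bᵀ i j := fun i j => hB0 j i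
  set A : Matrix (Fin n) (Fin n) ℝ := 1 - Bᵀ with hAdef
  have hdetA : IsUnit A.det := mmat_det Bᵀ hC0 hrowC
  have hAT : Aᵀ = 1 - B := by
    simp [hAdef, Matrix.transpose_sub]
  -- inverse of the Jacobian
  have hJinv : (JMPR α R x)⁻¹ = -(A⁻¹)ᵀ := by
    apply Matrix.inv_eq_right_inv
    rw [hJ]
    have : (B - 1 : Matrix (Fin n) (Fin n) ℝ) = -Aᵀ := by rw [hAT]; simp
    rw [this, Matrix.neg_mul, Matrix.mul_neg, neg_neg, ← Matrix.transpose_mul,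
      Matrix.nonsing_inv_mul A hdetA, Matrix.transpose_one]
  set d : Fin n → ℝ := (A⁻¹)ᵀ.mulVec f with hddef
  have hy : x - (JMPR α R x)⁻¹.mulVec f = x + d := by
    rw [hJinv, Matrix.neg_mulVec, sub_neg_eq_add, hddef]
  -- nonnegativity of A⁻¹ entries and of d
  have hAinv0 : ∀ i j, 0 ≤ A⁻¹ i j := by
    intro i j
    have hb : ∀ k, 0 ≤ (Pi.single j 1 : Fin n → ℝ) k := by
      intro k
      by_cases hk : k = j
      · subst hk; simp
      · simp [Pi.single_eq_of_ne hk]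
    have := mmat_nonneg Bᵀ hC0 hrowC (Pi.single j 1) hb i
    rw [← hAdef, Matrix.mulVec_single] at this
    simpa using this
  have hd0 : ∀ i, 0 ≤ d i := by
    intro i
    simp only [hddef, Matrix.mulVec, dotProduct, Matrix.transpose_apply]
    exact Finset.sum_nonneg fun j _ => mul_nonneg (hAinv0 j i) (hf j)
  -- (1 - B) d = f
  have hAd : (1 - B).mulVec d = f := by
    rw [← hAT, hddef, Matrix.mulVec_mulVec, ← Matrix.transpose_mul,
      Matrix.nonsing_inv_mul A hdetA, Matrix.transpose_one, Matrix.one_mulVec]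
  have hAd' : ∀ i, d i - B.mulVec d i = f i := by
    intro i
    have := congrFun hAd i
    rwa [Matrix.sub_mulVec, Matrix.one_mulVec, Pi.sub_apply] at this
  -- sum bookkeeping
  set δ := ∑ i, d i with hδdef
  have hδ0 : 0 ≤ δ := Finset.sum_nonneg fun i _ => hd0 i
  have hsumBd : ∑ i, B.mulVec d i = 2 * α * s * δ := by
    simp only [Matrix.mulVec, dotProduct]
    rw [Finset.sum_comm]
    have : ∀ k, ∑ i, B i k * d k = 2 * α * s * d k := by
      intro k; rw [← Finset.sum_mul, hBc k]
    rw [Finset.sum_congr rfl fun k _ => this k, ← Finset.mul_sum, ← hδdef]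
  have hsumf1 : ∑ i, f i = δ - 2 * α * s * δ := by
    rw [← Finset.sum_congr rfl fun i _ => hAd' i, Finset.sum_sub_distrib, hsumBd, ← hδdef]
  have hRxx : ∑ i, R.mulVec (fun p => x p.1 * x p.2) i = s * s := by
    simp only [Matrix.mulVec, dotProduct]
    rw [Finset.sum_comm]
    have h1 : ∀ p : Fin n × Fin n, ∑ i, R i p * (x p.1 * x p.2) = x p.1 * x p.2 :=
      fun p => by rw [← Finset.sum_mul, hRc p, one_mul]
    rw [Finset.sum_congr rfl fun p _ => h1 p, Fintype.sum_prod_type]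
    simp_rw [← Finset.mul_sum]
    rw [← Finset.sum_mul, ← hsdef]
  have hsumf2 : ∑ i, f i = α * (s * s) + (1 - α) - s := by
    simp only [hfdef, fMPR, Pi.add_apply, Pi.sub_apply, Pi.smul_apply, smul_eq_mul]
    rw [Finset.sum_sub_distrib, Finset.sum_add_distrib, ← Finset.mul_sum, ← Finset.mul_sum,
      hRxx, hv1, ← hsdef]
    ring
  have hδle : δ ≤ 1 - s := by
    have heq : δ - 2 * α * s * δ = α * (s * s) + (1 - α) - s := by
      rw [← hsumf1, hsumf2]
    nlinarith [mul_nonneg hα0 (sq_nonneg (1 - s))]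
  refine ⟨?_, ?_, ?_, ?_⟩
  · intro i
    rw [hy]
    have := hd0 i
    simp only [Pi.add_apply]
    linarith
  · intro i
    rw [hy]
    have := add_nonneg (hx i) (hd0 i)
    simpa using this
  · rw [hy]
    have : ∑ i, (x + d) i = s + δ := by
      simp only [Pi.add_apply]
      rw [Finset.sum_add_distrib, ← hsdef, ← hδdef]
    rw [this]
    linarith
  · intro i
    rw [hy, fMPR_taylor α R v x d i]
    have hJd : (JMPR α R x).mulVec d i = -f i := by
      rw [hJ, Matrix.sub_mulVec, Matrix.one_mulVec, Pi.sub_apply]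
      have := hAd' i
      linarith
    have hRdd : 0 ≤ R.mulVec (fun p => d p.1 * d p.2) i := by
      simp only [Matrix.mulVec, dotProduct]
      exact Finset.sum_nonneg fun p _ => mul_nonneg (hR0 i p) (mul_nonneg (hd0 p.1) (hd0 p.2))
    have := mul_nonneg hα0 hRdd
    rw [hJd, ← hfdef]
    linarith

/-- For `m = 3`, `0 ≤ α < 1/2`, the Newton sequence `x_0 = 0`,
`x_{k+1} = x_k - J_f(x_k)⁻¹ f(x_k)` satisfies, for every `k`:
`x_k ≥ 0`, `eᵀx_k ≤ 1`, `f(x_k) ≥ 0`, and `x_{k+1} ≥ x_k` entrywise. -/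
theorem stmt14 {n : ℕ} (α : ℝ) (hα0 : 0 ≤ α) (hα1 : α < 1 / 2)
    (R : Matrix (Fin n) (Fin n × Fin n) ℝ)
    (hR0 : ∀ i j, 0 ≤ R i j) (hRc : ∀ j, ∑ i, R i j = 1)
    (v : Fin n → ℝ) (hv0 : ∀ i, 0 ≤ v i) (hv1 : ∑ i, v i = 1)
    (x : ℕ → Fin n → ℝ) (hx0 : x 0 = 0)
    (hstep : ∀ k, x (k + 1) = x k - (JMPR α R (x k))⁻¹.mulVec (fMPR α R v (x k))) :
    ∀ k, (∀ i, 0 ≤ x k i) ∧ (∑ i, x k i ≤ 1) ∧ (∀ i, 0 ≤ fMPR α R v (x k) i) ∧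
      ∀ i, x k i ≤ x (k + 1) i := by
  have key : ∀ k, (∀ i, 0 ≤ x k i) ∧ (∑ i, x k i ≤ 1) ∧
      (∀ i, 0 ≤ fMPR α R v (x k) i) := by
    intro k
    induction k with
    | zero =>
      rw [hx0]
      refine ⟨fun i => le_refl 0, by simp, fun i => ?_⟩
      have : fMPR α R v 0 i = (1 - α) * v i := by
        simp [fMPR, Matrix.mulVec, dotProduct]
      rw [this]
      exact mul_nonneg (by linarith) (hv0 i)
    | succ k ih =>
      obtain ⟨h1, h2, h3⟩ := ih
      obtain ⟨ha, hb, hc, hd⟩ := newton_step α hα0 hα1 R hR0 hRc v hv1 (x k) h1 h2 h3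
      rw [hstep k]
      exact ⟨hb, hc, hd⟩
  intro k
  obtain ⟨h1, h2, h3⟩ := key k
  refine ⟨h1, h2, h3, fun i => ?_⟩
  have := (newton_step α hα0 hα1 R hR0 hRc v hv1 (x k) h1 h2 h3).1 i
  rw [hstep k]
  exact this
end

section
/- Let g(x) = αR(x ⊗ ⋯ ⊗ x) + (1-α)v on the simplex Ω = {x ≥ 0, eᵀx = 1}, with R ∈ ℝ^{n×n^{m-1}} column-stochastic, v stochastic, and 0 ≤ α < 1/(m-1). Then for any x, y ∈ Ω, ‖g(x) - g(y)‖₁ ≤ α(m-1)‖x - y‖₁; hence g is a contraction on Ω and has a unique fixed point in Ω. -/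
open Finset
open scoped ENNReal NNReal

private lemma sum_prod_pi {n k : ℕ} (f : Fin n → ℝ) :
    ∑ j : Fin k → Fin n, ∏ l, f (j l) = (∑ i, f i) ^ k := by
  induction k with
  | zero => simp
  | succ k ih =>
    rw [← Equiv.sum_comp (Fin.consEquiv fun _ : Fin (k+1) => Fin n)
      (fun j : Fin (k+1) → Fin n => ∏ l, f (j l))]
    simp only [Fin.consEquiv_apply]
    rw [Fintype.sum_prod_type]
    simp only [Fin.prod_univ_succ, Fin.cons_zero, Fin.cons_succ]
    rw [pow_succ, ← ih, mul_comm]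
    rw [Finset.sum_mul]
    exact Finset.sum_congr rfl fun a _ => by rw [Finset.mul_sum]

private lemma key_bound {n k : ℕ} (x y : Fin n → ℝ)
    (hx0 : ∀ i, 0 ≤ x i) (hx1 : ∑ i, x i = 1)
    (hy0 : ∀ i, 0 ≤ y i) (hy1 : ∑ i, y i = 1) :
    ∑ j : Fin k → Fin n, |∏ l, x (j l) - ∏ l, y (j l)| ≤ (k : ℝ) * ∑ i, |x i - y i| := by
  induction k with
  | zero => simp
  | succ k ih =>
    rw [← Equiv.sum_comp (Fin.consEquiv fun _ : Fin (k+1) => Fin n)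
      (fun j : Fin (k+1) → Fin n => |∏ l, x (j l) - ∏ l, y (j l)|)]
    simp only [Fin.consEquiv_apply]
    rw [Fintype.sum_prod_type]
    simp only [Fin.prod_univ_succ, Fin.cons_zero, Fin.cons_succ]
    have h1 : ∀ (a : Fin n) (j : Fin k → Fin n),
        |x a * ∏ l, x (j l) - y a * ∏ l, y (j l)| ≤
          |x a - y a| * ∏ l, x (j l) + y a * |∏ l, x (j l) - ∏ l, y (j l)| := by
      intro a j
      have hpx : 0 ≤ ∏ l, x (j l) := Finset.prod_nonneg fun l _ => hx0 _
      calc |x a * ∏ l, x (j l) - y a * ∏ l, y (j l)|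
          = |(x a - y a) * ∏ l, x (j l)
              + y a * (∏ l, x (j l) - ∏ l, y (j l))| := by ring_nf
        _ ≤ |(x a - y a) * ∏ l, x (j l)|
              + |y a * (∏ l, x (j l) - ∏ l, y (j l))| := abs_add_le _ _
        _ = |x a - y a| * ∏ l, x (j l)
              + y a * |∏ l, x (j l) - ∏ l, y (j l)| := by
            rw [abs_mul, abs_mul, abs_of_nonneg hpx, abs_of_nonneg (hy0 a)]
    calc ∑ a : Fin n, ∑ j : Fin k → Fin n,
            |x a * ∏ l, x (j l) - y a * ∏ l, y (j l)|
        ≤ ∑ a : Fin n, ∑ j : Fin k → Fin n,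
            (|x a - y a| * ∏ l, x (j l)
              + y a * |∏ l, x (j l) - ∏ l, y (j l)|) := by
          apply Finset.sum_le_sum; intro a _
          exact Finset.sum_le_sum fun j _ => h1 a j
      _ = (∑ a, |x a - y a|) * (∑ j : Fin k → Fin n, ∏ l, x (j l))
            + (∑ a, y a) * ∑ j : Fin k → Fin n,
                |∏ l, x (j l) - ∏ l, y (j l)| := by
          simp only [Finset.sum_add_distrib, Finset.sum_mul_sum]
      _ ≤ (∑ a, |x a - y a|) + (k : ℝ) * ∑ i, |x i - y i| := by
          rw [sum_prod_pi, hx1, one_pow, mul_one, hy1, one_mul]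
          exact add_le_add (le_refl _) ih
      _ = ((k + 1 : ℕ) : ℝ) * ∑ i, |x i - y i| := by push_cast; ring

/-- `g(x) = α R (x⊗⋯⊗x) + (1-α)v` is an `α(m-1)`-Lipschitz (in ℓ¹) map on the simplex
when `0 ≤ α < 1/(m-1)`, hence a contraction with a unique fixed point in the simplex. -/
theorem stmt18 {n m : ℕ} (hm : 2 ≤ m) (hn : 0 < n) (α : ℝ) (hα0 : 0 ≤ α)
    (hα1 : α < 1 / ((m : ℝ) - 1))
    (R : Matrix (Fin n) (Fin (m - 1) → Fin n) ℝ)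
    (hR0 : ∀ i j, 0 ≤ R i j) (hRc : ∀ j, ∑ i, R i j = 1)
    (v : Fin n → ℝ) (hv0 : ∀ i, 0 ≤ v i) (hv1 : ∑ i, v i = 1)
    (g : (Fin n → ℝ) → (Fin n → ℝ))
    (hg : g = fun x => α • R.mulVec (fun i => ∏ l, x (i l)) + (1 - α) • v)
    (Ω : Set (Fin n → ℝ))
    (hΩ : Ω = {x | (∀ i, 0 ≤ x i) ∧ ∑ i, x i = 1}) :
    (∀ x ∈ Ω, ∀ y ∈ Ω,
        ∑ i, |g x i - g y i| ≤ α * ((m : ℝ) - 1) * ∑ i, |x i - y i|) ∧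
      ∃! x, x ∈ Ω ∧ g x = x := by
  have hm1 : (1:ℝ) ≤ (m:ℝ) - 1 := by
    have : (2:ℝ) ≤ m := by exact_mod_cast hm
    linarith
  have hmc : ((m - 1 : ℕ) : ℝ) = (m : ℝ) - 1 := by
    have := Nat.cast_sub (le_trans one_le_two hm) (R := ℝ)
    simpa using this
  -- main Lipschitz estimate
  have hlip : ∀ x ∈ Ω, ∀ y ∈ Ω,
      ∑ i, |g x i - g y i| ≤ α * ((m : ℝ) - 1) * ∑ i, |x i - y i| := by
    intro x hx y hy
    rw [hΩ] at hx hy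
    obtain ⟨hx0, hx1⟩ := hx
    obtain ⟨hy0, hy1⟩ := hy
    subst hg
    simp only [Pi.add_apply, Pi.smul_apply, smul_eq_mul]
    have hdiff : ∀ i, α * Matrix.mulVec R (fun j => ∏ l, x (j l)) i + (1 - α) * v i
        - (α * Matrix.mulVec R (fun j => ∏ l, y (j l)) i + (1 - α) * v i)
        = α * ∑ j, R i j * ((∏ l, x (j l)) - ∏ l, y (j l)) := by
      intro i
      simp only [Matrix.mulVec, dotProduct]
      rw [add_sub_add_right_eq_sub, Finset.mul_sum, Finset.mul_sum, Finset.mul_sum,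
        ← Finset.sum_sub_distrib]
      exact Finset.sum_congr rfl fun j _ => by ring
    calc ∑ i, |α * Matrix.mulVec R (fun j => ∏ l, x (j l)) i + (1 - α) * v i
            - (α * Matrix.mulVec R (fun j => ∏ l, y (j l)) i + (1 - α) * v i)|
        = ∑ i, |α * ∑ j, R i j * ((∏ l, x (j l)) - ∏ l, y (j l))| :=
          Finset.sum_congr rfl fun i _ => by rw [hdiff]
      _ ≤ ∑ i, α * ∑ j, R i j * |(∏ l, x (j l)) - ∏ l, y (j l)| := by
          apply Finset.sum_le_sum; intro i _
          rw [abs_mul, abs_of_nonneg hα0]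
          gcongr
          exact (Finset.abs_sum_le_sum_abs _ _).trans (le_of_eq (by
            congr 1; ext j; rw [abs_mul, abs_of_nonneg (hR0 i j)]))
      _ = α * ∑ j, (∑ i, R i j) * |(∏ l, x (j l)) - ∏ l, y (j l)| := by
          rw [← Finset.mul_sum, Finset.sum_comm]
          exact congrArg (α * ·) (Finset.sum_congr rfl fun j _ => (Finset.sum_mul ..).symm)
      _ = α * ∑ j : Fin (m-1) → Fin n, |(∏ l, x (j l)) - ∏ l, y (j l)| :=
          congrArg (α * ·) (Finset.sum_congr rfl fun j _ => by rw [hRc j, one_mul])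
      _ ≤ α * (((m - 1 : ℕ) : ℝ) * ∑ i, |x i - y i|) := by
          gcongr
          exact key_bound x y hx0 hx1 hy0 hy1
      _ = α * ((m : ℝ) - 1) * ∑ i, |x i - y i| := by rw [hmc]; ring
  refine ⟨hlip, ?_⟩
  -- set up contraction on PiLp 1
  have hα1' : (1:ℝ) - α ≥ 0 := by
    have h1 : 1 / ((m:ℝ) - 1) ≤ 1 := by
      rw [div_le_one (by linarith)]; linarith
    linarith
  -- g maps Ω to Ω
  have hmaps : ∀ x ∈ Ω, g x ∈ Ω := by
    intro x hx
    rw [hΩ] at hx ⊢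
    obtain ⟨hx0, hx1⟩ := hx
    subst hg
    constructor
    · intro i
      simp only [Pi.add_apply, Pi.smul_apply, smul_eq_mul]
      have h1 : 0 ≤ Matrix.mulVec R (fun j => ∏ l, x (j l)) i := by
        apply Finset.sum_nonneg
        intro j _
        exact mul_nonneg (hR0 i j) (Finset.prod_nonneg fun l _ => hx0 _)
      have h2 := hv0 i
      positivity
    · simp only [Pi.add_apply, Pi.smul_apply, smul_eq_mul]
      rw [Finset.sum_add_distrib, ← Finset.mul_sum, ← Finset.mul_sum, hv1]
      have : ∑ i, Matrix.mulVec R (fun j => ∏ l, x (j l)) i = 1 := by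
        simp only [Matrix.mulVec, dotProduct]
        rw [Finset.sum_comm]
        have : ∀ j : Fin (m-1) → Fin n, ∑ i, R i j * ∏ l, x (j l)
            = ∏ l, x (j l) := by
          intro j; rw [← Finset.sum_mul, hRc j, one_mul]
        rw [Finset.sum_congr rfl fun j _ => this j, sum_prod_pi, hx1, one_pow]
      rw [this, mul_one]
      ring
  -- work in PiLp 1
  let E := PiLp 1 (fun _ : Fin n => ℝ)
  have hdist : ∀ a b : E, dist a b = ∑ i, |a i - b i| := by
    intro a b
    rw [PiLp.dist_eq_sum (by norm_num : 0 < (1 : ℝ≥0∞).toReal)]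
    simp [Real.dist_eq]
  let Ω' : Set E := WithLp.ofLp ⁻¹' Ω
  have hclosed : IsClosed Ω' := by
    have : Ω' = (⋂ i, {x : E | 0 ≤ x i}) ∩ {x : E | ∑ i, x i = 1} := by
      rw [show Ω' = WithLp.ofLp ⁻¹' Ω from rfl, hΩ]
      ext x; simp only [Set.mem_preimage, Set.mem_inter_iff, Set.mem_iInter, Set.mem_setOf_eq]; exact Iff.rfl
    rw [this]
    have hcont : ∀ i : Fin n, Continuous fun x : E => x i := by
      intro i
      exact (continuous_apply i).comp (PiLp.continuous_ofLp (p := 1) (β := fun _ : Fin n => ℝ))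
    exact IsClosed.inter (isClosed_iInter fun i =>
        isClosed_le continuous_const (hcont i))
      (isClosed_eq (continuous_finset_sum _ fun i _ => hcont i) continuous_const)
  have hvΩ : v ∈ Ω := by rw [hΩ]; exact ⟨hv0, hv1⟩
  haveI : Nonempty Ω' := ⟨⟨WithLp.toLp 1 v, hvΩ⟩⟩
  haveI : CompleteSpace Ω' := hclosed.completeSpace_coe
  set K : ℝ≥0 := ⟨α * ((m:ℝ) - 1), mul_nonneg hα0 (by linarith)⟩ with hK
  have hKlt : (K : ℝ≥0) < 1 := by
    rw [← NNReal.coe_lt_coe]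
    show α * ((m:ℝ) - 1) < 1
    have := (lt_div_iff₀ (by linarith : (0:ℝ) < (m:ℝ) - 1)).mp hα1
    simpa using this
  let f : Ω' → Ω' := fun x => ⟨WithLp.toLp 1 (g x.1), hmaps x.1 x.2⟩
  have hcontr : ContractingWith K f := by
    refine ⟨hKlt, LipschitzWith.of_dist_le_mul fun a b => ?_⟩
    rw [Subtype.dist_eq, Subtype.dist_eq, hdist, hdist]
    show _ ≤ (K : ℝ) * _
    calc ∑ i, |(g a.1) i - (g b.1) i| ≤ α * ((m:ℝ) - 1) * ∑ i, |a.1 i - b.1 i| :=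
          hlip a.1 a.2 b.1 b.2
      _ = (K : ℝ) * ∑ i, |a.1 i - b.1 i| := rfl
  obtain x₀ := ContractingWith.fixedPoint f hcontr
  have hfix : Function.IsFixedPt f (ContractingWith.fixedPoint f hcontr) :=
    hcontr.fixedPoint_isFixedPt
  refine ⟨(ContractingWith.fixedPoint f hcontr).1,
    ⟨(ContractingWith.fixedPoint f hcontr).2, ?_⟩, ?_⟩
  · have := congrArg Subtype.val hfix
    exact congrArg WithLp.ofLp this
  · rintro y ⟨hyΩ, hyfix⟩
    have : f ⟨WithLp.toLp 1 y, hyΩ⟩ = ⟨WithLp.toLp 1 y, hyΩ⟩ :=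
      Subtype.ext (congrArg (WithLp.toLp 1) hyfix)
    have := hcontr.fixedPoint_unique' this hfix
    exact congrArg (fun z => WithLp.ofLp z.1) this
end
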